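/- Let p > 1 be real, a > 0, b > 0, and r ∈ (0,b). Then ∑_{k ∈ ℤ} (e^{-a p^{kb}} - e^{-a p^{(k+1)b}}) · p^{-kr} ≤ p^r · a^{r/b} · Γ(1 - r/b), where Γ is the Gamma function. -/

import Mathlib

open Real MeasureTheory Set

/-- The key moment estimate: the two-sided series
`∑_{k∈ℤ} (e^{-a p^{kb}} - e^{-a p^{(k+1)b}}) p^{-kr}` is bounded by
`p^r a^{r/b} Γ(1 - r/b)`. -/
theorem stmt_4 (p a b r : ℝ) (hp : 1 < p) (ha : 0 < a) (hb : 0 < b)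
    (hr : 0 < r) (hrb : r < b) :
    ∑' k : ℤ,
        (Real.exp (-(a * p ^ ((k : ℝ) * b))) - Real.exp (-(a * p ^ (((k : ℝ) + 1) * b)))) *
          p ^ (-((k : ℝ) * r))
      ≤ p ^ r * a ^ (r / b) * Real.Gamma (1 - r / b) := by
  have hp0 : (0 : ℝ) < p := lt_trans one_pos hp
  set s : ℝ := 1 - r / b with hs_def
  have hrb' : 0 < r / b := div_pos hr hb
  have hrb1 : r / b < 1 := (div_lt_one hb).mpr hrb
  have hs : 0 < s := by simp only [hs_def]; linarith
  -- the endpoints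
  set e : ℤ → ℝ := fun k => p ^ ((k : ℝ) * b) with he_def
  have he_pos : ∀ k, 0 < e k := fun k => Real.rpow_pos_of_pos hp0 _
  have he_mono : ∀ ⦃j k : ℤ⦄, j ≤ k → e j ≤ e k := by
    intro j k hjk
    refine (Real.rpow_le_rpow_left_iff hp).mpr ?_
    have : (j : ℝ) ≤ (k : ℝ) := by exact_mod_cast hjk
    nlinarith
  set S : ℤ → Set ℝ := fun k => Ioc (e k) (e (k + 1)) with hS_def
  have hSmeas : ∀ k, MeasurableSet (S k) := fun k => measurableSet_Ioc
  have hdisj : Pairwise (Function.onFun Disjoint S) := by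
    intro j k hjk
    simp only [Function.onFun, hS_def, Set.Ioc_disjoint_Ioc]
    rcases lt_or_gt_of_ne hjk with h | h
    · exact le_trans (min_le_left _ _) (le_trans (he_mono h) (le_max_right _ _))
    · exact le_trans (min_le_right _ _) (le_trans (he_mono h) (le_max_left _ _))
  have hUnion : (⋃ k, S k) = Ioi (0 : ℝ) := by
    ext u
    simp only [mem_iUnion, hS_def, mem_Ioc, mem_Ioi]
    constructor
    · rintro ⟨k, hk, -⟩
      exact lt_trans (he_pos k) hk
    · intro hu
      set L : ℝ := Real.logb p u with hL_def
      have huL : p ^ L = u := Real.rpow_logb hp0 (ne_of_gt hp) hu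
      refine ⟨⌈L / b⌉ - 1, ?_, ?_⟩
      · rw [← huL, he_def]
        refine (Real.rpow_lt_rpow_left_iff hp).mpr ?_
        have h1 : ((⌈L / b⌉ - 1 : ℤ) : ℝ) < L / b := by
          push_cast
          linarith [Int.ceil_lt_add_one (L / b)]
        calc ((⌈L / b⌉ - 1 : ℤ) : ℝ) * b < (L / b) * b := by
              exact mul_lt_mul_of_pos_right h1 hb
          _ = L := by field_simp
      · rw [← huL, he_def]
        refine (Real.rpow_le_rpow_left_iff hp).mpr ?_
        have h2 : L / b ≤ ((⌈L / b⌉ - 1 + 1 : ℤ) : ℝ) := by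
          push_cast
          linarith [Int.le_ceil (L / b)]
        calc L = (L / b) * b := by field_simp
          _ ≤ ((⌈L / b⌉ - 1 + 1 : ℤ) : ℝ) * b := mul_le_mul_of_nonneg_right h2 hb.le
  -- the dominating function
  set G : ℝ → ℝ := fun t => p ^ r * (a * (t ^ (s - 1) * Real.exp (-(a * t)))) with hG_def
  have hGint : IntegrableOn G (Ioi (0 : ℝ)) := by
    have h0 : IntegrableOn (fun t : ℝ => t ^ (s - 1) * Real.exp (-a * t ^ (1 : ℝ)))
        (Ioi (0 : ℝ)) :=
      integrableOn_rpow_mul_exp_neg_mul_rpow (by linarith) zero_lt_one ha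
    have h0' : IntegrableOn (fun t : ℝ => t ^ (s - 1) * Real.exp (-(a * t)))
        (Ioi (0 : ℝ)) := by
      simpa [Real.rpow_one, neg_mul] using h0
    simpa [hG_def, mul_assoc, IntegrableOn] using ((h0'.const_mul a).const_mul (p ^ r))
  have hsumG : HasSum (fun k : ℤ => ∫ t in S k, G t) (∫ t in Ioi (0 : ℝ), G t) := by
    have := MeasureTheory.hasSum_integral_iUnion hSmeas hdisj (hUnion ▸ hGint)
    rwa [hUnion] at this
  -- termwise bound
  set f : ℤ → ℝ := fun k =>
    (Real.exp (-(a * p ^ ((k : ℝ) * b))) - Real.exp (-(a * p ^ (((k : ℝ) + 1) * b)))) *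
      p ^ (-((k : ℝ) * r)) with hf_def
  have hkey : ∀ k : ℤ, e (k + 1) = p ^ (((k : ℝ) + 1) * b) := by
    intro k; simp only [he_def]; push_cast; ring_nf
  have hkey0 : ∀ k : ℤ, e k = p ^ ((k : ℝ) * b) := fun k => rfl
  have hf_nonneg : ∀ k, 0 ≤ f k := by
    intro k
    apply mul_nonneg _ (Real.rpow_pos_of_pos hp0 _).le
    have : a * p ^ ((k : ℝ) * b) ≤ a * p ^ (((k : ℝ) + 1) * b) := by
      refine mul_le_mul_of_nonneg_left ?_ ha.le
      refine (Real.rpow_le_rpow_left_iff hp).mpr ?_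
      nlinarith
    simpa using Real.exp_le_exp.mpr (neg_le_neg this)
  have hle : ∀ k : ℤ, f k ≤ ∫ t in S k, G t := by
    intro k
    have hxy : e k ≤ e (k + 1) := he_mono (by omega)
    -- exp difference as integral
    have hderiv : ∀ t ∈ uIcc (e k) (e (k + 1)),
        HasDerivAt (fun t : ℝ => -Real.exp (-(a * t))) (a * Real.exp (-(a * t))) t := by
      intro t _
      have h1 : HasDerivAt (fun t : ℝ => -(a * t)) (-a) t := by
        simpa using ((hasDerivAt_id t).const_mul a).fun_neg
      have h2 := h1.exp
      rw [show a * Real.exp (-(a * t)) = -(Real.exp (-(a * t)) * -a) by ring]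
      exact h2.fun_neg
    have hcont : IntervalIntegrable (fun t : ℝ => a * Real.exp (-(a * t)))
        volume (e k) (e (k + 1)) := by
      apply Continuous.intervalIntegrable
      fun_prop
    have hint := intervalIntegral.integral_eq_sub_of_hasDerivAt hderiv hcont
    have heq : Real.exp (-(a * e k)) - Real.exp (-(a * e (k + 1)))
        = ∫ t in Ioc (e k) (e (k + 1)), a * Real.exp (-(a * t)) := by
      rw [← intervalIntegral.integral_of_le hxy, hint]
      ring
    have hf_eq : f k = ∫ t in S k, (a * Real.exp (-(a * t))) * p ^ (-((k : ℝ) * r)) := by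
      rw [MeasureTheory.integral_mul_const]
      simp only [hf_def]
      rw [← hkey k, ← hkey0 k, heq]
    rw [hf_eq]
    refine setIntegral_mono_on ?_ (hGint.mono_set ?_) (hSmeas k) ?_
    · apply (Continuous.integrableOn_Ioc (by fun_prop))
    · intro t ht
      exact lt_trans (he_pos k) ht.1
    · intro t ht
      obtain ⟨ht1, ht2⟩ := ht
      have ht0 : 0 < t := lt_trans (he_pos k) ht1
      have hbound : p ^ (-((k : ℝ) * r)) ≤ p ^ r * t ^ (s - 1) := by
        have h1 : (e (k + 1)) ^ (s - 1) ≤ t ^ (s - 1) :=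
          Real.rpow_le_rpow_of_nonpos ht0 ht2 (by rw [hs_def]; linarith)
        have h2 : (e (k + 1)) ^ (s - 1) = p ^ ((((k : ℝ) + 1) * b) * (s - 1)) := by
          rw [hkey, ← Real.rpow_mul hp0.le]
        have h3 : p ^ r * p ^ ((((k : ℝ) + 1) * b) * (s - 1)) = p ^ (-((k : ℝ) * r)) := by
          rw [← Real.rpow_add hp0]
          congr 1
          have hsb : b * (s - 1) = -r := by
            have hs1 : s - 1 = -(r / b) := by rw [hs_def]; ring
            rw [hs1]
            field_simp
          have : (((k : ℝ) + 1) * b) * (s - 1) = ((k : ℝ) + 1) * (b * (s - 1)) := by ring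
          rw [this, hsb]; ring
        calc p ^ (-((k : ℝ) * r)) = p ^ r * (e (k + 1)) ^ (s - 1) := by rw [h2, h3]
          _ ≤ p ^ r * t ^ (s - 1) :=
            mul_le_mul_of_nonneg_left h1 (Real.rpow_pos_of_pos hp0 r).le
      have hpos : 0 < a * Real.exp (-(a * t)) := mul_pos ha (Real.exp_pos _)
      calc (a * Real.exp (-(a * t))) * p ^ (-((k : ℝ) * r))
          ≤ (a * Real.exp (-(a * t))) * (p ^ r * t ^ (s - 1)) :=
            mul_le_mul_of_nonneg_left hbound hpos.le
        _ = G t := by rw [hG_def]; ring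
  have hf_summable : Summable f :=
    Summable.of_nonneg_of_le hf_nonneg hle hsumG.summable
  calc (∑' k : ℤ, f k) ≤ ∑' k : ℤ, ∫ t in S k, G t :=
        Summable.tsum_le_tsum hle hf_summable hsumG.summable
    _ = ∫ t in Ioi (0 : ℝ), G t := hsumG.tsum_eq
    _ = p ^ r * (a * ((1 / a) ^ s * Real.Gamma s)) := by
        rw [hG_def]
        rw [MeasureTheory.integral_const_mul, MeasureTheory.integral_const_mul]
        rw [Real.integral_rpow_mul_exp_neg_mul_Ioi hs ha]
    _ = p ^ r * a ^ (r / b) * Real.Gamma (1 - r / b) := by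
        have h1a : (1 / a) ^ s = a ^ (-s) := by
          rw [one_div, ← Real.rpow_neg_one a, ← Real.rpow_mul ha.le]
          norm_num
        have h2a : a * a ^ (-s) = a ^ (r / b) := by
          nth_rewrite 1 [← Real.rpow_one a]
          rw [← Real.rpow_add ha]
          congr 1
          rw [hs_def]; ring
        rw [h1a, ← mul_assoc a, h2a]
        simp only [hs_def]
        ring
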